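/- Consider the linear program over variables (Ĉ_1,...,Ĉ_n, λ_j^i for j ∈ {1..n}, i ∈ {1..k}): minimize Σ_j w_j·Ĉ_j + Σ_{i,j} λ_j^i·E_j^i subject to Ĉ_j ≥ Ĉ_{j−1} for j > 1; Ĉ_j ≥ r_{j'} + Σ_{j'' ≤ j, r_{j''} ≥ r_{j'}} Σ_i λ_{j''}^i·x_{j''}^i for every j and every j' ≤ j with r_{j'} ≤ r_j; Σ_i λ_j^i = 1; λ_j^i ≥ 0. Then for any feasible schedule σ respecting the completion ordering 1 ≺ ... ≺ n, there is a feasible LP solution with Ĉ_j = Ĉ_j(σ), Σ_i λ_j^i·x_j^i = x_j(σ), and Σ_i λ_j^i·E_j^i = E_j(σ) for all j. -/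

import Mathlib

open MeasureTheory

/-- Lemma: schedule ⟹ feasible LP solution. Jobs `1,…,n` have
release times `r`, weights `w`, volumes `v > 0`; the processor has speeds
`s i > 0` with powers `P i`, and `x j i = v j / s i`, `E j i = x j i * P i`.
A feasible schedule is given by `job : ℝ → Option (Fin n)` (which job runs at
time `t`, `none` = idle) and `spd : ℝ → Fin k` (speed level at time `t`), which
never processes a job before its release and fully processes every volume; its
completion times are `C j = sSup X_j`, its extended completion times are
`Ĉ j = sSup {C j' | j' ≤ j}`, and it respects the completion ordering
(`C` monotone). Then there is `λ : Fin n → Fin k → ℝ` such that, together with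
the extended completion times `Ĉ`, all LP constraints hold and moreover
`Σ_i λ j i · x j i = x_j(σ)` and `Σ_i λ j i · E j i = E_j(σ)` for all `j`. -/
theorem stmt_16 (n k : ℕ)
    (r w v : Fin n → ℝ) (s P : Fin k → ℝ)
    (hv : ∀ j, 0 < v j) (hs : ∀ i, 0 < s i)
    (x E : Fin n → Fin k → ℝ)
    (hx : ∀ j i, x j i = v j / s i) (hE : ∀ j i, E j i = x j i * P i)
    (job : ℝ → Option (Fin n)) (spd : ℝ → Fin k)
    (hmeas : ∀ (j : Fin n) (i : Fin k),
      MeasurableSet {t : ℝ | job t = some j ∧ spd t = i})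
    (hbdd : ∀ j : Fin n, Bornology.IsBounded {t : ℝ | job t = some j})
    (hrel : ∀ (t : ℝ) (j : Fin n), job t = some j → r j ≤ t)
    (hvol : ∀ j : Fin n, (∫ t in {t : ℝ | job t = some j}, s (spd t)) = v j)
    (C : Fin n → ℝ) (hCdef : ∀ j, C j = sSup {t : ℝ | job t = some j})
    (hCmono : Monotone C)
    (Chat : Fin n → ℝ) (hChat : ∀ j, Chat j = sSup (C '' {j' | j' ≤ j}))
    (xproc Eproc : Fin n → ℝ)
    (hxproc : ∀ j, xproc j = (volume {t : ℝ | job t = some j}).toReal)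
    (hEproc : ∀ j, Eproc j = ∫ t in {t : ℝ | job t = some j}, P (spd t)) :
    ∃ lam : Fin n → Fin k → ℝ,
      (∀ j i, 0 ≤ lam j i) ∧
      (∀ j, ∑ i, lam j i = 1) ∧
      (∀ j, ∑ i, lam j i * x j i = xproc j) ∧
      (∀ j, ∑ i, lam j i * E j i = Eproc j) ∧
      (∀ j j' : Fin n, j' ≤ j → Chat j' ≤ Chat j) ∧
      (∀ j j' : Fin n, j' ≤ j → r j' ≤ r j →
        Chat j ≥ r j' +
          ∑ j'' ∈ Finset.univ.filter (fun j'' : Fin n => j'' ≤ j ∧ r j' ≤ r j''),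
            ∑ i, lam j'' i * x j'' i) := by
  classical
  set A : Fin n → Fin k → Set ℝ := fun j i => {t : ℝ | job t = some j ∧ spd t = i} with hA
  have hSA : ∀ j : Fin n, {t : ℝ | job t = some j} = ⋃ i, A j i := by
    intro j
    ext t
    simp only [hA, Set.mem_setOf_eq, Set.mem_iUnion]
    constructor
    · intro h; exact ⟨spd t, h, rfl⟩
    · rintro ⟨i, h, -⟩; exact h
  have hSmeas : ∀ j : Fin n, MeasurableSet {t : ℝ | job t = some j} := fun j => by
    rw [hSA]; exact MeasurableSet.iUnion (fun i => hmeas j i)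
  have hAdisj : ∀ j, Pairwise (Function.onFun Disjoint (A j)) := by
    intro j i i' hii'
    refine Set.disjoint_left.2 ?_
    rintro t ⟨-, h1⟩ ⟨-, h2⟩
    exact hii' (h1 ▸ h2 ▸ rfl)
  have hAfin : ∀ j i, volume (A j i) < ⊤ := fun j i =>
    ((hbdd j).subset (fun t ht => ht.1)).measure_lt_top
  have hSfin : ∀ j : Fin n, volume {t : ℝ | job t = some j} < ⊤ := fun j =>
    (hbdd j).measure_lt_top
  -- key integral computation
  have key : ∀ (j : Fin n) (f : Fin k → ℝ),
      (∫ t in {t : ℝ | job t = some j}, f (spd t))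
        = ∑ i, f i * (volume (A j i)).toReal := by
    intro j f
    rw [hSA]
    rw [integral_iUnion_fintype (fun i => hmeas j i) (hAdisj j) ?_]
    · refine Finset.sum_congr rfl fun i _ => ?_
      rw [setIntegral_congr_fun (hmeas j i) (g := fun _ => f i) (fun t ht => by rw [ht.2]),
        setIntegral_const]
      simp [mul_comm, Measure.real, hA]
    · intro i
      have hc : IntegrableOn (fun _ : ℝ => f i) (A j i) volume :=
        integrableOn_const (hAfin j i).ne
      exact hc.congr_fun (fun t ht => by rw [ht.2]) (hmeas j i)
  have hxproc' : ∀ j, xproc j = ∑ i, (volume (A j i)).toReal := by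
    intro j
    rw [hxproc, hSA j, measure_iUnion (hAdisj j) (fun i => hmeas j i)]
    rw [tsum_fintype, ENNReal.toReal_sum (fun i _ => (hAfin j i).ne)]
  have hvol' : ∀ j, ∑ i, s i * (volume (A j i)).toReal = v j := fun j => by
    rw [← key j s]; exact hvol j
  set lam : Fin n → Fin k → ℝ :=
    fun j i => s i * (volume (A j i)).toReal / v j with hlam
  have hlamx : ∀ j, ∑ i, lam j i * x j i = xproc j := by
    intro j
    rw [hxproc']
    refine Finset.sum_congr rfl fun i _ => ?_
    have h1 : v j ≠ 0 := (hv j).ne'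
    have h2 : s i ≠ 0 := (hs i).ne'
    rw [hlam, hx]
    field_simp
  have hChatC : ∀ j, Chat j = C j := by
    intro j
    rw [hChat]
    apply le_antisymm
    · refine csSup_le ⟨C j, ⟨j, le_refl j, rfl⟩⟩ ?_
      rintro y ⟨j', hj', rfl⟩
      exact hCmono hj'
    · exact le_csSup (((Set.finite_Iic j).image C).bddAbove) ⟨j, le_refl j, rfl⟩
  refine ⟨lam, ?_, ?_, hlamx, ?_, ?_, ?_⟩
  · intro j i
    exact div_nonneg (mul_nonneg (hs i).le ENNReal.toReal_nonneg) (hv j).le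
  · intro j
    rw [← Finset.sum_div, hvol' j, div_self (hv j).ne']
  · intro j
    rw [hEproc, key j P]
    refine Finset.sum_congr rfl fun i _ => ?_
    have h1 : v j ≠ 0 := (hv j).ne'
    have h2 : s i ≠ 0 := (hs i).ne'
    rw [hlam, hE, hx]
    field_simp
  · intro j j' h
    rw [hChatC, hChatC]
    exact hCmono h
  · intro j j' hjj hrr
    -- each job's set is nonempty
    have hSne : ∀ j'' : Fin n, {t : ℝ | job t = some j''}.Nonempty := by
      intro j''
      by_contra h
      rw [Set.not_nonempty_iff_eq_empty] at h
      have hv2 := hvol j''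
      rw [h] at hv2
      simp at hv2
      exact (hv j'').ne' hv2.symm
    have hle : ∀ (j'' : Fin n), ∀ t ∈ {t : ℝ | job t = some j''}, t ≤ C j'' := by
      intro j'' t ht
      rw [hCdef]
      exact le_csSup (hbdd j'').bddAbove ht
    have hrC : r j' ≤ C j := by
      obtain ⟨t, ht⟩ := hSne j
      exact le_trans (le_trans hrr (hrel t j ht)) (hle j t ht)
    set F := Finset.univ.filter (fun j'' : Fin n => j'' ≤ j ∧ r j' ≤ r j'') with hF
    have hsub : ∀ j'' ∈ F, {t : ℝ | job t = some j''} ⊆ Set.Icc (r j') (C j) := by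
      intro j'' hj'' t ht
      rw [hF, Finset.mem_filter] at hj''
      exact ⟨le_trans hj''.2.2 (hrel t j'' ht),
        le_trans (hle j'' t ht) (hCmono hj''.2.1)⟩
    have hSdisj : (↑F : Set (Fin n)).PairwiseDisjoint
        (fun j'' : Fin n => {t : ℝ | job t = some j''}) := by
      intro a _ b _ hab
      refine Set.disjoint_left.2 ?_
      rintro t h1 h2
      rw [Set.mem_setOf_eq] at h1 h2
      exact hab (Option.some_injective _ (h1.symm.trans h2))
    have hmeasle : ∑ j'' ∈ F, volume {t : ℝ | job t = some j''}
        ≤ ENNReal.ofReal (C j - r j') := by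
      rw [← measure_biUnion_finset hSdisj (fun j'' _ => hSmeas j'')]
      calc volume (⋃ j'' ∈ F, {t : ℝ | job t = some j''})
          ≤ volume (Set.Icc (r j') (C j)) := measure_mono (Set.iUnion₂_subset hsub)
        _ = ENNReal.ofReal (C j - r j') := by rw [Real.volume_Icc]
    have hreal : ∑ j'' ∈ F, xproc j'' ≤ C j - r j' := by
      have h1 : ∑ j'' ∈ F, xproc j''
          = (∑ j'' ∈ F, volume {t : ℝ | job t = some j''}).toReal := by
        rw [ENNReal.toReal_sum (fun j'' _ => (hSfin j'').ne)]
        exact Finset.sum_congr rfl fun j'' _ => by rw [hxproc]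
      rw [h1]
      calc (∑ j'' ∈ F, volume {t : ℝ | job t = some j''}).toReal
          ≤ (ENNReal.ofReal (C j - r j')).toReal :=
            ENNReal.toReal_mono ENNReal.ofReal_ne_top hmeasle
        _ = C j - r j' := ENNReal.toReal_ofReal (by linarith)
    have hsum : ∑ j'' ∈ F, ∑ i, lam j'' i * x j'' i = ∑ j'' ∈ F, xproc j'' :=
      Finset.sum_congr rfl fun j'' _ => hlamx j''
    rw [hChatC, hsum]
    linarith
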